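/- If X ≥ Y > 0 are strictly positive operators and s·I ≥ X ≥ t·I for positive reals s ≥ t > 0, then ((s+t)²/(4st)) X² ≥ Y². -/

import Mathlib

noncomputable section

section Aux

variable {A : Type*} [CStarAlgebra A] [PartialOrder A] [StarOrderedRing A]

/-- Auxiliary: nonnegative real scalar multiplication is monotone in a C⋆-algebra. -/
lemma kant_smul_le_smul {a b : A} (h : a ≤ b) {r : ℝ} (hr : 0 ≤ r) : r • a ≤ r • b := by
  rw [← sub_nonneg, ← smul_sub]
  have hc : (0 : A) ≤ b - a := sub_nonneg.mpr h
  have h0 : (0 : A) ≤ cfc (fun x : ℝ => r * x) (b - a) :=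
    cfc_nonneg fun x hx => mul_nonneg hr (spectrum_nonneg_of_nonneg hc hx)
  rwa [cfc_const_mul_id r (b - a)] at h0

lemma kant_smul_nonneg {a : A} (h : 0 ≤ a) {r : ℝ} (hr : 0 ≤ r) : 0 ≤ r • a := by
  simpa using kant_smul_le_smul h hr

end Aux

variable {H : Type*} [NormedAddCommGroup H] [InnerProductSpace ℂ H] [CompleteSpace H]

set_option maxHeartbeats 1000000 in
/-- Kantorovich-type squaring inequality with bounds on the larger operator. -/
theorem kantorovich_square_upper (X Y : H →L[ℂ] H) (hY : 0 ≤ Y) (hYinv : IsUnit Y)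
    (hYX : Y ≤ X) (s t : ℝ) (ht : 0 < t) (hts : t ≤ s)
    (hXs : X ≤ s • (1 : H →L[ℂ] H)) (hXt : t • (1 : H →L[ℂ] H) ≤ X) :
    Y ^ (2 : ℕ) ≤ ((s + t) ^ 2 / (4 * s * t)) • X ^ (2 : ℕ) := by
  have hs : 0 < s := ht.trans_le hts
  set K : ℝ := (s + t) ^ 2 / (4 * s * t) with hKdef
  have hKpos : 0 < K := by positivity
  have hone : (0 : H →L[ℂ] H) ≤ 1 := by simpa using star_mul_self_nonneg (1 : H →L[ℂ] H)
  have hX0 : (0 : H →L[ℂ] H) ≤ X := le_trans (kant_smul_nonneg hone ht.le) hXt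
  have hXsa : IsSelfAdjoint X := .of_nonneg hX0
  -- spectrum of X is contained in [t, s]
  have hmapt : algebraMap ℝ (H →L[ℂ] H) t = t • (1 : H →L[ℂ] H) :=
    Algebra.algebraMap_eq_smul_one t
  have hmaps : algebraMap ℝ (H →L[ℂ] H) s = s • (1 : H →L[ℂ] H) :=
    Algebra.algebraMap_eq_smul_one s
  have hspec : spectrum ℝ X ⊆ Set.Icc t s := by
    intro x hx
    exact ⟨algebraMap_le_iff_le_spectrum (r := t) (a := X) hXsa |>.mp (hmapt ▸ hXt) x hx,
      le_algebraMap_iff_spectrum_le (r := s) (a := X) hXsa |>.mp (hmaps ▸ hXs) x hx⟩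
  -- key inequality from the quadratic on the spectrum: X*X + st ≤ (s+t)X
  have key1 : X * X + (s * t) • (1 : H →L[ℂ] H) ≤ (s + t) • X := by
    have h0 : (0 : H →L[ℂ] H) ≤ cfc (fun x : ℝ => (s + t) * x - (x * x + s * t)) X := by
      refine cfc_nonneg fun x hx => ?_
      obtain ⟨h1, h2⟩ := hspec hx
      nlinarith
    have e1 : cfc (fun x : ℝ => (s + t) * x) X = (s + t) • X := cfc_const_mul_id (s + t) X
    have e2 : cfc (fun x : ℝ => x * x + s * t) X
        = X * X + (s * t) • (1 : H →L[ℂ] H) := by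
      rw [cfc_add (a := X) (f := fun x : ℝ => x * x) (g := fun _ : ℝ => s * t),
        cfc_mul (fun x : ℝ => x) (fun x : ℝ => x) X, cfc_id' ℝ X, cfc_const (s * t) X,
        Algebra.algebraMap_eq_smul_one]
    have e : cfc (fun x : ℝ => (s + t) * x - (x * x + s * t)) X
        = (s + t) • X - (X * X + (s * t) • (1 : H →L[ℂ] H)) := by
      rw [cfc_sub (fun x : ℝ => (s + t) * x) (fun x : ℝ => x * x + s * t) X, e1, e2]
    rw [e] at h0
    exact sub_nonneg.mp h0
  -- X is invertible
  have hXinv : IsUnit X := by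
    have htu : IsUnit (t • (1 : H →L[ℂ] H)) := by
      rw [← hmapt]
      exact (ht.ne'.isUnit).map (algebraMap ℝ (H →L[ℂ] H))
    exact CStarAlgebra.isUnit_of_le _ hXt (IsStrictlyPositive.iff_of_unital.mpr ⟨kant_smul_nonneg hone ht.le, htu⟩)
  set Xu : (H →L[ℂ] H)ˣ := hXinv.unit with hXu
  set Yu : (H →L[ℂ] H)ˣ := hYinv.unit with hYu
  have hXuv : (Xu : H →L[ℂ] H) = X := hXinv.unit_spec
  have hYuv : (Yu : H →L[ℂ] H) = Y := hYinv.unit_spec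
  set B : H →L[ℂ] H := (↑Xu⁻¹ : H →L[ℂ] H) with hBdef
  set C : H →L[ℂ] H := (↑Yu⁻¹ : H →L[ℂ] H) with hCdef
  have hB0 : (0 : H →L[ℂ] H) ≤ B := CFC.inv_nonneg_of_nonneg Xu (hXuv ▸ hX0)
  have hC0 : (0 : H →L[ℂ] H) ≤ C := CFC.inv_nonneg_of_nonneg Yu (hYuv ▸ hY)
  have hBsa : IsSelfAdjoint B := .of_nonneg hB0
  have hCsa : IsSelfAdjoint C := .of_nonneg hC0
  have hBA : B ≤ C := CStarAlgebra.inv_le_inv (a := Yu) (b := Xu) (hYuv ▸ hY)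
    (by rw [hYuv, hXuv]; exact hYX)
  have hBX : B * X = 1 := by rw [← hXuv, hBdef]; exact_mod_cast Xu.inv_mul
  have hXB : X * B = 1 := by rw [← hXuv, hBdef]; exact_mod_cast Xu.mul_inv
  -- conjugate key1 by B
  have key2 : 1 + (s * t) • (B * B) ≤ (s + t) • B := by
    have h := star_left_conjugate_le_conjugate key1 B
    rw [hBsa.star_eq] at h
    calc 1 + (s * t) • (B * B)
        = B * (X * X + (s * t) • (1 : H →L[ℂ] H)) * B := by
          rw [mul_add, add_mul, ← mul_assoc B X X, hBX, one_mul, hXB]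
          simp [mul_smul_comm, smul_mul_assoc]
      _ ≤ B * ((s + t) • X) * B := h
      _ = (s + t) • B := by
          rw [mul_smul_comm, smul_mul_assoc, mul_assoc, hXB, mul_one]
  have key3 : (s + t) • B ≤ (s + t) • C := kant_smul_le_smul hBA (by positivity)
  -- perfect square trick for C
  have key4 : (s + t) • C - 1 ≤ (s * t * K) • (C * C) := by
    set z : H →L[ℂ] H := ((s + t) / 2) • C - 1 with hz
    have hzsa : IsSelfAdjoint z := by
      have h1 : IsSelfAdjoint (((s + t) / 2) • C) := by
        rw [IsSelfAdjoint, star_smul, star_trivial, hCsa.star_eq]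
      exact h1.sub (IsSelfAdjoint.one _)
    have hsq : (0 : H →L[ℂ] H) ≤ z * z := by
      simpa [hzsa.star_eq] using star_mul_self_nonneg z
    have hexp : z * z = (s * t * K) • (C * C) - (s + t) • C + 1 := by
      have hc : s * t * K = ((s + t) / 2) * ((s + t) / 2) := by
        rw [hKdef]; field_simp; ring
      rw [hz, hc]
      simp only [sub_mul, mul_sub, smul_mul_assoc, mul_smul_comm, smul_smul, one_mul, mul_one]
      module
    rw [hexp] at hsq
    rw [← sub_nonneg]
    convert hsq using 1
    abel
  have key5 : (s * t) • (B * B) ≤ (s * t * K) • (C * C) := by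
    have h1 : (s * t) • (B * B) ≤ (s + t) • B - 1 := by
      rw [le_sub_iff_add_le, add_comm]
      exact key2
    exact h1.trans ((sub_le_sub_right key3 1).trans key4)
  have key6 : B * B ≤ K • (C * C) := by
    have h := kant_smul_le_smul key5 (le_of_lt (by positivity : (0:ℝ) < (s * t)⁻¹))
    rwa [smul_smul, smul_smul, inv_mul_cancel₀ (by positivity : (s*t) ≠ 0), one_smul,
      show (s * t)⁻¹ * (s * t * K) = K by field_simp] at h
  -- invert once more
  have hYY0 : (0 : H →L[ℂ] H) ≤ Y * Y := by
    have h := star_mul_self_nonneg Y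
    rwa [(IsSelfAdjoint.of_nonneg hY).star_eq] at h
  have hXX0 : (0 : H →L[ℂ] H) ≤ X * X := by
    have h := star_mul_self_nonneg X
    rwa [hXsa.star_eq] at h
  have hYYCC : Y * Y * (C * C) = 1 := by
    rw [mul_assoc, ← mul_assoc Y C C, ← hYuv, hCdef]
    simp [← mul_assoc]
  have hCCYY : C * C * (Y * Y) = 1 := by
    rw [mul_assoc, ← mul_assoc C Y Y, ← hYuv, hCdef]
    simp [← mul_assoc]
  set b : (H →L[ℂ] H)ˣ := ⟨K⁻¹ • (Y * Y), K • (C * C), by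
      rw [smul_mul_assoc, mul_smul_comm, smul_smul, inv_mul_cancel₀ hKpos.ne', one_smul, hYYCC],
      by
      rw [smul_mul_assoc, mul_smul_comm, smul_smul, mul_inv_cancel₀ hKpos.ne', one_smul, hCCYY]⟩
    with hb
  set a : (H →L[ℂ] H)ˣ := Xu * Xu with ha
  have hav : (↑a : H →L[ℂ] H) = X * X := by rw [ha, Units.val_mul, hXuv]
  have hainv : (↑a⁻¹ : H →L[ℂ] H) = B * B := by
    rw [ha, mul_inv_rev, Units.val_mul, ← hBdef]
  have h6' : (↑a⁻¹ : H →L[ℂ] H) ≤ (↑b⁻¹ : H →L[ℂ] H) := by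
    rw [hainv]
    exact key6
  have hfinal := (CStarAlgebra.inv_le_inv_iff (a := a) (b := b)
    (hav ▸ hXX0)
    (show (0 : H →L[ℂ] H) ≤ K⁻¹ • (Y * Y) from kant_smul_nonneg hYY0 (by positivity))).mp h6'
  rw [hav] at hfinal
  have h7 := kant_smul_le_smul (show K⁻¹ • (Y * Y) ≤ X * X from hfinal) hKpos.le
  rw [smul_smul, mul_inv_cancel₀ hKpos.ne', one_smul] at h7
  calc Y ^ (2 : ℕ) = Y * Y := sq Y
    _ ≤ K • (X * X) := h7
    _ = K • X ^ (2 : ℕ) := by rw [sq]
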